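/- Let L : ℝ^d → ℝ be differentiable with ℓ-Lipschitz gradient (ℓ > 0), let γ > 0 and M_g > 0, let (η_t)_{t≥0} be positive step sizes, and let (G_t)_{t≥0} be symmetric positive definite matrices with λ_max(G_t⁻¹) ≤ γ⁻¹ for all t. Define θ_{t+1} := θ_t − η_t G_t⁻¹ ∇L(θ_t), and assume ‖∇L(θ_t)‖ ≤ M_g for all t. Then for every T ≥ 1: Σ_{t=0}^{T−1} η_t λ_min(G_t⁻¹) ‖∇L(θ_t)‖² ≤ L(θ₀) − L(θ_T) + (ℓ/2)(M_g/γ)² Σ_{t=0}^{T−1} η_t². -/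

import Mathlib

open Matrix

open RealInnerProductSpace in
private lemma ginger_toEuclideanLin_eigvec {d : ℕ} {A : Matrix (Fin d) (Fin d) ℝ}
    (hA : A.IsHermitian) (i : Fin d) :
    Matrix.toEuclideanLin A (hA.eigenvectorBasis i) =
      hA.eigenvalues i • hA.eigenvectorBasis i := by
  have h := hA.mulVec_eigenvectorBasis i
  rw [Matrix.toEuclideanLin_apply]
  apply (WithLp.equiv 2 (Fin d → ℝ)).injective
  simpa using h

open RealInnerProductSpace in
private lemma ginger_repr_toEuclideanLin {d : ℕ} {A : Matrix (Fin d) (Fin d) ℝ}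
    (hA : A.IsHermitian) (x : EuclideanSpace ℝ (Fin d)) (i : Fin d) :
    hA.eigenvectorBasis.repr (Matrix.toEuclideanLin A x) i =
      hA.eigenvalues i * hA.eigenvectorBasis.repr x i := by
  have hsymm : (Matrix.toEuclideanLin A).IsSymmetric :=
    (Matrix.isHermitian_iff_isSymmetric).1 hA
  rw [OrthonormalBasis.repr_apply_apply, OrthonormalBasis.repr_apply_apply,
    ← hsymm (hA.eigenvectorBasis i) x, ginger_toEuclideanLin_eigvec hA i,
    real_inner_smul_left]

open RealInnerProductSpace in
private lemma ginger_inner_sum_repr {d : ℕ} {A : Matrix (Fin d) (Fin d) ℝ}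
    (hA : A.IsHermitian) (x : EuclideanSpace ℝ (Fin d)) :
    ⟪x, Matrix.toEuclideanLin A x⟫ =
      ∑ i, hA.eigenvalues i * (hA.eigenvectorBasis.repr x i) ^ 2 := by
  rw [← hA.eigenvectorBasis.repr.inner_map_map x (Matrix.toEuclideanLin A x)]
  rw [PiLp.inner_apply]
  refine Finset.sum_congr rfl fun i _ => ?_
  rw [ginger_repr_toEuclideanLin hA x i]
  simp [RCLike.inner_apply]
  ring

open RealInnerProductSpace in
private lemma ginger_norm_sq_sum_repr {d : ℕ} {A : Matrix (Fin d) (Fin d) ℝ}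
    (hA : A.IsHermitian) (x : EuclideanSpace ℝ (Fin d)) :
    ‖x‖ ^ 2 = ∑ i, (hA.eigenvectorBasis.repr x i) ^ 2 := by
  rw [← real_inner_self_eq_norm_sq,
    ← hA.eigenvectorBasis.repr.inner_map_map x x, PiLp.inner_apply]
  refine Finset.sum_congr rfl fun i _ => ?_
  simp [RCLike.inner_apply]

open RealInnerProductSpace in
private lemma ginger_iInf_le_inner {d : ℕ} {A : Matrix (Fin d) (Fin d) ℝ}
    (hA : A.IsHermitian) (x : EuclideanSpace ℝ (Fin d)) :
    (⨅ i, hA.eigenvalues i) * ‖x‖ ^ 2 ≤ ⟪x, Matrix.toEuclideanLin A x⟫ := by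
  rcases isEmpty_or_nonempty (Fin d) with h | h
  · simp [ginger_inner_sum_repr hA x, ginger_norm_sq_sum_repr hA x, Real.iInf_of_isEmpty]
  · rw [ginger_inner_sum_repr hA x, ginger_norm_sq_sum_repr hA x, Finset.mul_sum]
    refine Finset.sum_le_sum fun i _ => ?_
    have h1 : (⨅ j, hA.eigenvalues j) ≤ hA.eigenvalues i :=
      ciInf_le (Set.finite_range _).bddBelow i
    exact mul_le_mul_of_nonneg_right h1 (sq_nonneg _)

private lemma ginger_norm_toEuclideanLin_le {d : ℕ} {A : Matrix (Fin d) (Fin d) ℝ}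
    (hA : A.IsHermitian) {c : ℝ} (hc : 0 ≤ c)
    (hb : ∀ i, |hA.eigenvalues i| ≤ c) (x : EuclideanSpace ℝ (Fin d)) :
    ‖Matrix.toEuclideanLin A x‖ ≤ c * ‖x‖ := by
  have hsq : ‖Matrix.toEuclideanLin A x‖ ^ 2 ≤ (c * ‖x‖) ^ 2 := by
    rw [ginger_norm_sq_sum_repr hA (Matrix.toEuclideanLin A x), mul_pow,
      ginger_norm_sq_sum_repr hA x, Finset.mul_sum]
    refine Finset.sum_le_sum fun i _ => ?_
    rw [ginger_repr_toEuclideanLin hA x i, mul_pow]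
    have : hA.eigenvalues i ^ 2 ≤ c ^ 2 := by
      rw [← sq_abs]
      exact pow_le_pow_left₀ (abs_nonneg _) (hb i) 2
    exact mul_le_mul_of_nonneg_right this (sq_nonneg _)
  have h1 : 0 ≤ c * ‖x‖ := mul_nonneg hc (norm_nonneg _)
  nlinarith [norm_nonneg (Matrix.toEuclideanLin A x)]

open RealInnerProductSpace in
private lemma ginger_descent_lemma {F : Type*} [NormedAddCommGroup F] [InnerProductSpace ℝ F]
    [CompleteSpace F] (L : F → ℝ) (hL : Differentiable ℝ L) (ℓ : ℝ) (hℓ : 0 ≤ ℓ)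
    (hLip : ∀ a b : F, ‖gradient L a - gradient L b‖ ≤ ℓ * ‖a - b‖) (x v : F) :
    L (x + v) ≤ L x + ⟪gradient L x, v⟫ + ℓ / 2 * ‖v‖ ^ 2 := by
  set φ : ℝ → ℝ := fun s => ⟪gradient L (x + s • v), v⟫ with hφ
  have hgrad_fderiv : ∀ p : F, ∀ w : F, fderiv ℝ L p w = ⟪gradient L p, w⟫ := by
    intro p w
    have h1 : HasGradientAt L (gradient L p) p := (hL p).hasGradientAt
    have h2 : HasFDerivAt L (InnerProductSpace.toDual ℝ F (gradient L p)) p := h1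
    rw [h2.fderiv]
    simp [InnerProductSpace.toDual_apply_apply]
  have hcont_g : Continuous (gradient L) := by
    have : LipschitzWith ℓ.toNNReal (gradient L) := by
      apply LipschitzWith.of_dist_le_mul
      intro a b
      rw [dist_eq_norm, dist_eq_norm]
      simpa [Real.coe_toNNReal ℓ hℓ] using hLip a b
    exact this.continuous
  have hcont_φ : Continuous φ := by
    apply Continuous.inner
    · exact hcont_g.comp (continuous_const.add (continuous_id.smul continuous_const))
    · exact continuous_const
  have hderiv : ∀ s : ℝ, HasDerivAt (fun s : ℝ => L (x + s • v)) (φ s) s := by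
    intro s
    have hc : HasDerivAt (fun s : ℝ => x + s • v) v s := by
      simpa using ((hasDerivAt_id s).smul_const v).const_add x
    have hf : HasFDerivAt L (fderiv ℝ L (x + s • v)) (x + s • v) :=
      (hL (x + s • v)).hasFDerivAt
    have := hf.comp_hasDerivAt s hc
    rw [hgrad_fderiv] at this
    exact this
  have heq : L (x + v) - L x = ∫ s in (0:ℝ)..1, φ s := by
    have := intervalIntegral.integral_eq_sub_of_hasDerivAt
      (f := fun s : ℝ => L (x + s • v)) (f' := φ)
      (fun s _ => hderiv s) (hcont_φ.intervalIntegrable 0 1)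
    simpa using this.symm
  have hbound : ∀ s ∈ Set.Icc (0:ℝ) 1, φ s ≤ ⟪gradient L x, v⟫ + ℓ * ‖v‖ ^ 2 * s := by
    intro s hs
    have h1 : φ s - ⟪gradient L x, v⟫ = ⟪gradient L (x + s • v) - gradient L x, v⟫ := by
      rw [inner_sub_left]
    have h2 : ⟪gradient L (x + s • v) - gradient L x, v⟫ ≤
        ‖gradient L (x + s • v) - gradient L x‖ * ‖v‖ := real_inner_le_norm _ _
    have h3 : ‖gradient L (x + s • v) - gradient L x‖ ≤ ℓ * (s * ‖v‖) := by
      have := hLip (x + s • v) x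
      simpa [norm_smul, abs_of_nonneg hs.1] using this
    nlinarith [norm_nonneg v, hs.1]
  have hint : (∫ s in (0:ℝ)..1, (⟪gradient L x, v⟫ + ℓ * ‖v‖ ^ 2 * s)) =
      ⟪gradient L x, v⟫ + ℓ / 2 * ‖v‖ ^ 2 := by
    have hi : IntervalIntegrable (fun s : ℝ => ℓ * ‖v‖ ^ 2 * s) MeasureTheory.volume 0 1 :=
      (continuous_const.mul continuous_id).intervalIntegrable 0 1
    rw [intervalIntegral.integral_add (intervalIntegrable_const) hi,
      intervalIntegral.integral_const_mul]
    simp [integral_id]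
    ring
  have hmono : (∫ s in (0:ℝ)..1, φ s) ≤
      ∫ s in (0:ℝ)..1, (⟪gradient L x, v⟫ + ℓ * ‖v‖ ^ 2 * s) := by
    apply intervalIntegral.integral_mono_on (by norm_num)
      (hcont_φ.intervalIntegrable 0 1)
      ((continuous_const.add (continuous_const.mul continuous_id)).intervalIntegrable 0 1)
    exact hbound
  linarith [heq ▸ hmono.trans_eq hint]

open RealInnerProductSpace in
/-- Telescoped descent inequality (Equations 29–30 in the proof of Theorem 1):
summing the per-step descent inequality over `T` preconditioned gradient steps. -/
theorem ginger_telescoped_descent (d : ℕ)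
    (L : EuclideanSpace ℝ (Fin d) → ℝ) (hL : Differentiable ℝ L)
    (ℓ : ℝ) (hℓ : 0 < ℓ)
    (hLip : ∀ θ₁ θ₂ : EuclideanSpace ℝ (Fin d),
      ‖gradient L θ₁ - gradient L θ₂‖ ≤ ℓ * ‖θ₁ - θ₂‖)
    (γ Mg : ℝ) (hγ : 0 < γ) (hMg : 0 < Mg)
    (η : ℕ → ℝ) (hη : ∀ t, 0 < η t)
    (G : ℕ → Matrix (Fin d) (Fin d) ℝ) (hG : ∀ t, (G t).PosDef)
    (hmax : ∀ t, (⨆ i, (hG t).inv.1.eigenvalues i) ≤ γ⁻¹)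
    (θ : ℕ → EuclideanSpace ℝ (Fin d))
    (hstep : ∀ t, θ (t + 1) = θ t - η t • Matrix.toEuclideanLin (G t)⁻¹ (gradient L (θ t)))
    (hgrad : ∀ t, ‖gradient L (θ t)‖ ≤ Mg) :
    ∀ T : ℕ, 1 ≤ T →
      ∑ t ∈ Finset.range T, η t * (⨅ i, (hG t).inv.1.eigenvalues i) * ‖gradient L (θ t)‖ ^ 2 ≤
        L (θ 0) - L (θ T) + ℓ / 2 * (Mg / γ) ^ 2 * ∑ t ∈ Finset.range T, η t ^ 2 := by
  intro T _
  have key : ∀ t, η t * (⨅ i, (hG t).inv.1.eigenvalues i) * ‖gradient L (θ t)‖ ^ 2 ≤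
      (L (θ t) - L (θ (t + 1))) + ℓ / 2 * (Mg / γ) ^ 2 * η t ^ 2 := by
    intro t
    set g := gradient L (θ t) with hg
    set w : EuclideanSpace ℝ (Fin d) := Matrix.toEuclideanLin (G t)⁻¹ g with hw
    set v : EuclideanSpace ℝ (Fin d) := (-(η t)) • w with hv
    have hstep' : θ (t + 1) = θ t + v := by
      rw [hstep t, sub_eq_add_neg, ← neg_smul]
    have hdesc := ginger_descent_lemma L hL ℓ hℓ.le hLip (θ t) v
    rw [← hstep'] at hdesc
    have hinner : ⟪g, v⟫ = (-(η t)) * ⟪g, w⟫ := real_inner_smul_right g w _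
    have hray : (⨅ i, (hG t).inv.1.eigenvalues i) * ‖g‖ ^ 2 ≤ ⟪g, w⟫ :=
      ginger_iInf_le_inner (hG t).inv.1 g
    have hpos : ∀ i, 0 < (hG t).inv.1.eigenvalues i := fun i => (hG t).inv.eigenvalues_pos i
    have hub : ∀ i, |(hG t).inv.1.eigenvalues i| ≤ γ⁻¹ := by
      intro i
      rw [abs_of_pos (hpos i)]
      exact le_trans (le_ciSup (Set.finite_range _).bddAbove i) (hmax t)
    have hnormw : ‖w‖ ≤ γ⁻¹ * ‖g‖ :=
      ginger_norm_toEuclideanLin_le (hG t).inv.1 (inv_nonneg.2 hγ.le) hub g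
    have hnv : ‖v‖ ≤ η t * (Mg / γ) := by
      have h1 : ‖v‖ = η t * ‖w‖ := by
        rw [hv, norm_smul]
        simp [abs_of_pos (hη t)]
      rw [h1, div_eq_mul_inv, mul_comm Mg γ⁻¹]
      have h2 : ‖w‖ ≤ γ⁻¹ * Mg :=
        hnormw.trans (mul_le_mul_of_nonneg_left (hgrad t) (inv_nonneg.2 hγ.le))
      exact mul_le_mul_of_nonneg_left h2 (hη t).le
    have hsqv : ‖v‖ ^ 2 ≤ (Mg / γ) ^ 2 * η t ^ 2 := by
      have := pow_le_pow_left₀ (norm_nonneg v) hnv 2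
      calc ‖v‖ ^ 2 ≤ (η t * (Mg / γ)) ^ 2 := this
        _ = (Mg / γ) ^ 2 * η t ^ 2 := by ring
    have h1 : η t * ((⨅ i, (hG t).inv.1.eigenvalues i) * ‖g‖ ^ 2) ≤ η t * ⟪g, w⟫ :=
      mul_le_mul_of_nonneg_left hray (hη t).le
    have h2 : ℓ / 2 * ‖v‖ ^ 2 ≤ ℓ / 2 * ((Mg / γ) ^ 2 * η t ^ 2) :=
      mul_le_mul_of_nonneg_left hsqv (by linarith)
    nlinarith [hdesc, hinner, h1, h2]
  calc ∑ t ∈ Finset.range T, η t * (⨅ i, (hG t).inv.1.eigenvalues i) * ‖gradient L (θ t)‖ ^ 2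
      ≤ ∑ t ∈ Finset.range T, ((L (θ t) - L (θ (t + 1))) + ℓ / 2 * (Mg / γ) ^ 2 * η t ^ 2) :=
        Finset.sum_le_sum fun t _ => key t
    _ = L (θ 0) - L (θ T) + ℓ / 2 * (Mg / γ) ^ 2 * ∑ t ∈ Finset.range T, η t ^ 2 := by
        rw [Finset.sum_add_distrib, Finset.sum_range_sub' (fun i => L (θ i)) T, ← Finset.mul_sum]
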